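/- Interference formula for the Cooper-field density of mixtures: let n ≥ 1, let u₁,…,uₙ ∈ [0,1] with u₁+⋯+uₙ = 1, and let d₁,…,dₙ : ℝ → M₄(ℂ) be self-consistent trajectories. For each j set ν_j := 2(μ−λ) + γ·(1 − Re Tr(d_j(0)·(n↑+n↓))). Then for every t ∈ ℝ: Σ_{j=1}^{n} u_j·Tr(d_j(t)·A↓A↑) = Σ_{j=1}^{n} u_j·Tr(d_j(0)·A↓A↑)·exp(i·t·ν_j). -/

import Mathlib

open Matrix
open scoped ComplexOrder

noncomputable section

/-- `M₄(ℂ)`, the algebra of 4×4 complex matrices, identified with the linear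
operators on the one-site fermionic Fock space `ℂ⁴`. -/
abbrev M4 : Type := Matrix (Fin 4) (Fin 4) ℂ

noncomputable instance : NormedAddCommGroup M4 := Matrix.normedAddCommGroup
noncomputable instance : NormedSpace ℝ M4 := Matrix.normedSpace

/-- The canonical anticommutation relations for the two matrices `A↑ = Aup`,
`A↓ = Adn`: `Aₛ·Aₜ + Aₜ·Aₛ = 0` and `Aₛ·Aₜ* + Aₜ*·Aₛ = δ_{s,t}·1` for
`s, t ∈ {↑,↓}`. -/
def CAR (Aup Adn : M4) : Prop :=
  Aup * Aup + Aup * Aup = 0 ∧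
  Aup * Adn + Adn * Aup = 0 ∧
  Adn * Adn + Adn * Adn = 0 ∧
  Aup * Aupᴴ + Aupᴴ * Aup = 1 ∧
  Aup * Adnᴴ + Adnᴴ * Aup = 0 ∧
  Adn * Aupᴴ + Aupᴴ * Adn = 0 ∧
  Adn * Adnᴴ + Adnᴴ * Adn = 1

/-- `dh(c) := 2λ n↑n↓ − μ(n↑+n↓) − h(n↑−n↓) − γ(c·A↑*A↓* + c̄·A↓A↑)`,
where `nₛ := Aₛ*·Aₛ`. -/
def dh (Aup Adn : M4) (mu h lam gam : ℝ) (c : ℂ) : M4 :=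
  (2 * lam : ℂ) • (Aupᴴ * Aup * (Adnᴴ * Adn))
    - (mu : ℂ) • (Aupᴴ * Aup + Adnᴴ * Adn)
    - (h : ℂ) • (Aupᴴ * Aup - Adnᴴ * Adn)
    - (gam : ℂ) • (c • (Aupᴴ * Adnᴴ) + (starRingEnd ℂ c) • (Adn * Aup))

/-- A density matrix: Hermitian, positive semidefinite, of trace 1. -/
def IsDensityMatrix (d : M4) : Prop :=
  d.IsHermitian ∧ d.PosSemidef ∧ d.trace = 1

/-- A self-consistent trajectory: a differentiable map `d : ℝ → M₄(ℂ)` such that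
`d t` is a density matrix for all `t` and
`d′(t) = −i·[dh(Tr(d(t)·A↓A↑)), d(t)]` for all `t ∈ ℝ`. -/
def SelfConsistent (Aup Adn : M4) (mu h lam gam : ℝ) (d : ℝ → M4) : Prop :=
  (∀ t : ℝ, IsDensityMatrix (d t)) ∧
  ∀ t : ℝ, HasDerivAt d
      ((-Complex.I) •
        (dh Aup Adn mu h lam gam ((d t * (Adn * Aup)).trace) * d t
          - d t * dh Aup Adn mu h lam gam ((d t * (Adn * Aup)).trace))) t

/- ## Auxiliary lemmas: CAR rewriting rules -/
section rules
variable {Aup Adn : M4}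

lemma half_cancel {x : M4} (h : x + x = 0) : x = 0 := by
  have h2 : (2:ℂ) • x = 0 := by rw [two_smul]; exact h
  simpa using (smul_eq_zero.mp h2).resolve_left (by norm_num)

lemma r_uu (H : CAR Aup Adn) : Aup * Aup = 0 := half_cancel H.1
lemma r_dd (H : CAR Aup Adn) : Adn * Adn = 0 := half_cancel H.2.2.1
lemma r_du (H : CAR Aup Adn) : Adn * Aup = -(Aup * Adn) := eq_neg_of_add_eq_zero_right H.2.1
lemma r_uus (H : CAR Aup Adn) : Aup * Aupᴴ = 1 - Aupᴴ * Aup := eq_sub_of_add_eq H.2.2.2.1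
lemma r_uds (H : CAR Aup Adn) : Aup * Adnᴴ = -(Adnᴴ * Aup) := eq_neg_of_add_eq_zero_left H.2.2.2.2.1
lemma r_dus (H : CAR Aup Adn) : Adn * Aupᴴ = -(Aupᴴ * Adn) := eq_neg_of_add_eq_zero_left H.2.2.2.2.2.1
lemma r_dds (H : CAR Aup Adn) : Adn * Adnᴴ = 1 - Adnᴴ * Adn := eq_sub_of_add_eq H.2.2.2.2.2.2
lemma r_usus (H : CAR Aup Adn) : Aupᴴ * Aupᴴ = 0 := by
  have := congrArg conjTranspose (r_uu H); simpa using this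
lemma r_dsds (H : CAR Aup Adn) : Adnᴴ * Adnᴴ = 0 := by
  have := congrArg conjTranspose (r_dd H); simpa using this
lemma r_dsus (H : CAR Aup Adn) : Adnᴴ * Aupᴴ = -(Aupᴴ * Adnᴴ) := by
  have := congrArg conjTranspose (r_du H)
  simp only [conjTranspose_mul, conjTranspose_neg] at this
  rw [this, neg_neg]

lemma x_uu (H : CAR Aup Adn) (x : M4) : Aup * (Aup * x) = 0 := by
  rw [← mul_assoc, r_uu H, zero_mul]
lemma x_dd (H : CAR Aup Adn) (x : M4) : Adn * (Adn * x) = 0 := by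
  rw [← mul_assoc, r_dd H, zero_mul]
lemma x_usus (H : CAR Aup Adn) (x : M4) : Aupᴴ * (Aupᴴ * x) = 0 := by
  rw [← mul_assoc, r_usus H, zero_mul]
lemma x_dsds (H : CAR Aup Adn) (x : M4) : Adnᴴ * (Adnᴴ * x) = 0 := by
  rw [← mul_assoc, r_dsds H, zero_mul]
lemma x_du (H : CAR Aup Adn) (x : M4) : Adn * (Aup * x) = -(Aup * (Adn * x)) := by
  rw [← mul_assoc, r_du H, neg_mul, mul_assoc]
lemma x_uus (H : CAR Aup Adn) (x : M4) : Aup * (Aupᴴ * x) = x - Aupᴴ * (Aup * x) := by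
  rw [← mul_assoc, r_uus H, sub_mul, one_mul, mul_assoc]
lemma x_dds (H : CAR Aup Adn) (x : M4) : Adn * (Adnᴴ * x) = x - Adnᴴ * (Adn * x) := by
  rw [← mul_assoc, r_dds H, sub_mul, one_mul, mul_assoc]
lemma x_uds (H : CAR Aup Adn) (x : M4) : Aup * (Adnᴴ * x) = -(Adnᴴ * (Aup * x)) := by
  rw [← mul_assoc, r_uds H, neg_mul, mul_assoc]
lemma x_dus (H : CAR Aup Adn) (x : M4) : Adn * (Aupᴴ * x) = -(Aupᴴ * (Adn * x)) := by
  rw [← mul_assoc, r_dus H, neg_mul, mul_assoc]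
lemma x_dsus (H : CAR Aup Adn) (x : M4) : Adnᴴ * (Aupᴴ * x) = -(Aupᴴ * (Adnᴴ * x)) := by
  rw [← mul_assoc, r_dsus H, neg_mul, mul_assoc]

/- ## Commutator identities -/

lemma comm_B_dh (H : CAR Aup Adn) (mu h lam gam : ℝ) (c : ℂ) :
    (Adn * Aup) * dh Aup Adn mu h lam gam c - dh Aup Adn mu h lam gam c * (Adn * Aup)
      = ((2*lam : ℂ) - (2*mu : ℂ)) • (Adn * Aup)
        - ((gam : ℂ) * c) • (1 - Aupᴴ * Aup - Adnᴴ * Adn) := by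
  unfold dh
  simp only [mul_assoc, smul_mul_assoc, mul_smul_comm, sub_mul, mul_sub, add_mul, mul_add,
    neg_mul, mul_neg, smul_sub, smul_add, smul_neg, smul_smul,
    r_uu H, r_dd H, r_du H, r_uus H, r_uds H, r_dus H, r_dds H,
    r_usus H, r_dsds H, r_dsus H, x_uu H, x_dd H, x_usus H, x_dsds H, x_du H,
    x_uus H, x_dds H, x_uds H, x_dus H, x_dsus H,
    mul_one, one_mul, mul_zero, zero_mul, smul_zero, neg_neg, sub_zero, zero_sub, neg_zero]
  module

lemma comm_N_dh (H : CAR Aup Adn) (mu h lam gam : ℝ) (c : ℂ) :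
    (Aupᴴ * Aup + Adnᴴ * Adn) * dh Aup Adn mu h lam gam c
      - dh Aup Adn mu h lam gam c * (Aupᴴ * Aup + Adnᴴ * Adn)
      = (-(2 * (gam : ℂ) * c)) • (Aupᴴ * Adnᴴ)
        + (2 * (gam : ℂ) * starRingEnd ℂ c) • (Adn * Aup) := by
  unfold dh
  simp only [mul_assoc, smul_mul_assoc, mul_smul_comm, sub_mul, mul_sub, add_mul, mul_add,
    neg_mul, mul_neg, smul_sub, smul_add, smul_neg, smul_smul,
    r_uu H, r_dd H, r_du H, r_uus H, r_uds H, r_dus H, r_dds H,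
    r_usus H, r_dsds H, r_dsus H, x_uu H, x_dd H, x_usus H, x_dsds H, x_du H,
    x_uus H, x_dds H, x_uds H, x_dus H, x_dsus H,
    mul_one, one_mul, mul_zero, zero_mul, smul_zero, neg_neg, sub_zero, zero_sub, neg_zero]
  module

end rules

/- ## Analysis lemmas -/

lemma hasDerivAt_trace_mul (M : M4) {d : ℝ → M4} {D : M4} {t : ℝ}
    (hd : HasDerivAt d D t) :
    HasDerivAt (fun s => ((d s) * M).trace) ((D * M).trace) t := by
  let L : M4 →ₗ[ℝ] ℂ :=
    (((Matrix.traceLinearMap (Fin 4) ℂ ℂ).comp (LinearMap.mulRight ℂ M)).restrictScalars ℝ)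
  have := (L.toContinuousLinearMap.hasFDerivAt (x := d t)).comp_hasDerivAt t hd
  exact this

lemma star_trace_mul_conjT {d M : M4} (hd : d.IsHermitian) :
    (d * Mᴴ).trace = star ((d * M).trace) := by
  rw [← Matrix.trace_conjTranspose, Matrix.conjTranspose_mul, hd.eq, Matrix.trace_mul_comm]

lemma const_of_hasDerivAt_zero {f : ℝ → ℂ} (hf : ∀ t, HasDerivAt f 0 t) (t : ℝ) :
    f t = f 0 :=
  is_const_of_deriv_eq_zero (fun s => (hf s).differentiableAt)
    (fun s => (hf s).deriv) t 0

lemma ode_exp {f : ℝ → ℂ} {k : ℂ} (hf : ∀ t, HasDerivAt f (k * f t) t) (t : ℝ) :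
    f t = f 0 * Complex.exp (k * t) := by
  have hg : ∀ s : ℝ, HasDerivAt (fun s : ℝ => f s * Complex.exp (-k * s)) 0 s := by
    intro s
    have h1 : HasDerivAt (fun s : ℝ => (-k) * (s : ℂ)) (-k) s := by
      simpa using (Complex.ofRealCLM.hasDerivAt (x := s)).const_mul (-k)
    have h2 := h1.cexp
    have := (hf s).mul h2
    exact this.congr_deriv (by ring)
  have hconst : f t * Complex.exp (-k * t) = f 0 * Complex.exp (-k * (0:ℝ)) := by
    exact const_of_hasDerivAt_zero hg t
  have hne : Complex.exp (-k * t) ≠ 0 := Complex.exp_ne_zero _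
  simp only [Complex.ofReal_zero, mul_zero, Complex.exp_zero, mul_one] at hconst
  have : f t = f 0 * Complex.exp (k * t) ↔ f t * Complex.exp (-k * t)
      = f 0 * Complex.exp (k * t) * Complex.exp (-k * t) := by
    constructor
    · intro h; rw [h]
    · intro h; exact mul_right_cancel₀ hne h
  rw [this, hconst, mul_assoc, ← Complex.exp_add]
  ring_nf
  simp

/- ## Main single-trajectory lemma -/

lemma cooper_evolution (Aup Adn : M4) (hCAR : CAR Aup Adn)
    (mu h lam gam : ℝ) (d : ℝ → M4)
    (hd : SelfConsistent Aup Adn mu h lam gam d) (t : ℝ) :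
    (d t * (Adn * Aup)).trace
      = (d 0 * (Adn * Aup)).trace *
          Complex.exp (Complex.I * (t : ℂ) *
            ((2 * (mu - lam)
              + gam * (1 - ((d 0 * (Aupᴴ * Aup + Adnᴴ * Adn)).trace).re) : ℝ) : ℂ)) := by
  obtain ⟨hden, hder⟩ := hd
  set B : M4 := Adn * Aup with hB
  set Nop : M4 := Aupᴴ * Aup + Adnᴴ * Adn with hNop
  set α : ℝ → ℂ := fun s => (d s * B).trace with hα
  set N : ℝ → ℂ := fun s => (d s * Nop).trace with hN
  -- dagger of B
  have hBd : Aupᴴ * Adnᴴ = Bᴴ := by rw [hB, conjTranspose_mul]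
  -- trace of d s * B† is conjugate of α s
  have htrBd : ∀ s : ℝ, (d s * (Aupᴴ * Adnᴴ)).trace = star (α s) := by
    intro s
    rw [hBd]
    exact star_trace_mul_conjT (hden s).1
  -- cyclic rearrangement for commutators
  have hcyc : ∀ (X Y Z : M4), ((Y * X - X * Y) * Z).trace = (X * (Z * Y - Y * Z)).trace := by
    intro X Y Z
    rw [sub_mul, Matrix.trace_sub, mul_sub, Matrix.trace_sub]
    congr 1
    · rw [mul_assoc, Matrix.trace_mul_comm, mul_assoc]
    · rw [mul_assoc]
  -- N is conserved
  have hNderiv : ∀ s : ℝ, HasDerivAt N 0 s := by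
    intro s
    have h0 := hasDerivAt_trace_mul Nop (hder s)
    have heq : (((-Complex.I) •
        (dh Aup Adn mu h lam gam ((d s * (Adn * Aup)).trace) * d s
          - d s * dh Aup Adn mu h lam gam ((d s * (Adn * Aup)).trace))) * Nop).trace = 0 := by
      rw [smul_mul_assoc, Matrix.trace_smul, hcyc, comm_N_dh hCAR, mul_add, Matrix.trace_add,
        mul_smul_comm, mul_smul_comm, Matrix.trace_smul, Matrix.trace_smul, htrBd s]
      have : (d s * (Adn * Aup)).trace = α s := rfl
      rw [this]
      simp only [smul_eq_mul, Complex.star_def]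
      ring
    rw [heq] at h0
    exact h0
  have hNconst : ∀ s : ℝ, N s = N 0 := fun s => const_of_hasDerivAt_zero hNderiv s
  -- N 0 is real
  have hNreal : N 0 = ((N 0).re : ℂ) := by
    have hself : star (N 0) = N 0 := by
      have hH : Nopᴴ = Nop := by
        rw [hNop]
        simp [conjTranspose_add, conjTranspose_mul]
      calc star (N 0) = (d 0 * Nopᴴ).trace := (star_trace_mul_conjT (hden 0).1).symm
        _ = N 0 := by rw [hH]
    have him : (N 0).im = 0 := by
      have := congrArg Complex.im hself
      simp only [Complex.star_def, Complex.conj_im] at this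
      linarith
    exact Complex.ext (by simp) (by simp [him])
  -- the frequency
  set ν : ℝ := 2 * (mu - lam) + gam * (1 - (N 0).re) with hν
  -- α satisfies the linear ODE
  have hαderiv : ∀ s : ℝ, HasDerivAt α ((Complex.I * (ν : ℂ)) * α s) s := by
    intro s
    have h0 := hasDerivAt_trace_mul B (hder s)
    have heq : (((-Complex.I) •
        (dh Aup Adn mu h lam gam ((d s * (Adn * Aup)).trace) * d s
          - d s * dh Aup Adn mu h lam gam ((d s * (Adn * Aup)).trace))) * B).trace
        = (Complex.I * (ν : ℂ)) * α s := by
      rw [smul_mul_assoc, Matrix.trace_smul, hcyc, comm_B_dh hCAR, mul_sub, Matrix.trace_sub,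
        mul_smul_comm, mul_smul_comm, Matrix.trace_smul, Matrix.trace_smul]
      have h1 : (d s * (Adn * Aup)).trace = α s := rfl
      have h2 : (d s * (1 - Aupᴴ * Aup - Adnᴴ * Adn)).trace = 1 - N s := by
        rw [sub_sub, mul_sub, Matrix.trace_sub, mul_one, (hden s).2.2]
      rw [h1, h2, hNconst s, hNreal]
      simp only [smul_eq_mul, hν]
      push_cast
      ring
    rw [heq] at h0
    exact h0
  -- solve the ODE
  have := ode_exp hαderiv t
  calc (d t * (Adn * Aup)).trace = α t := rfl
    _ = α 0 * Complex.exp ((Complex.I * (ν : ℂ)) * t) := this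
    _ = _ := by
        rw [hν]
        have harg : Complex.I * ((2 * (mu - lam) + gam * (1 - (N 0).re) : ℝ) : ℂ) * (t : ℂ)
            = Complex.I * (t : ℂ) * ((2 * (mu - lam) + gam * (1 - (N 0).re) : ℝ) : ℂ) := by ring
        rw [harg]

/- ## Main theorem -/

/-- interference formula for the Cooper-field density of mixtures:
`Σⱼ uⱼ·Tr(dⱼ(t)·A↓A↑) = Σⱼ uⱼ·Tr(dⱼ(0)·A↓A↑)·exp(i·t·νⱼ)` with
`νⱼ = 2(μ−λ) + γ·(1 − Re Tr(dⱼ(0)·(n↑+n↓)))`. -/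
theorem interference_formula (Aup Adn : M4) (hCAR : CAR Aup Adn)
    (mu h lam gam : ℝ) (hgam : 0 ≤ gam)
    (n : ℕ) (hn : 1 ≤ n)
    (u : Fin n → ℝ) (hu : ∀ j, u j ∈ Set.Icc (0 : ℝ) 1) (hsum : ∑ j, u j = 1)
    (d : Fin n → ℝ → M4)
    (hd : ∀ j, SelfConsistent Aup Adn mu h lam gam (d j)) :
    ∀ t : ℝ,
      ∑ j, (u j : ℂ) * (d j t * (Adn * Aup)).trace
        = ∑ j, (u j : ℂ) * (d j 0 * (Adn * Aup)).trace *
            Complex.exp (Complex.I * (t : ℂ) *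
              ((2 * (mu - lam)
                + gam * (1 - ((d j 0 * (Aupᴴ * Aup + Adnᴴ * Adn)).trace).re) : ℝ) : ℂ)) := by
  intro t
  refine Finset.sum_congr rfl ?_
  intro j _
  rw [cooper_evolution Aup Adn hCAR mu h lam gam (d j) (hd j) t]
  ring
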